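/- Let ρ and σ be density operators on a finite-dimensional complex Hilbert space. The function Ψ(a) := max_{s ∈ ℝ} (a·s − φ(s+1)), where φ(s) := log Tr[ρ^{1−s}σ^{s}], satisfies Ψ(a) = Φ(a) − a for all a in [−D(ρ‖σ), D(σ‖ρ)], where Φ(a) := max_{s ∈ ℝ} (a·s − φ(s)); moreover Ψ is continuous and monotonically decreasing on this interval with Ψ(−D(ρ‖σ)) = D(ρ‖σ) and Ψ(D(σ‖ρ)) = 0. -/
import Mathlib


open scoped Matrix ComplexOrder
open Filter

noncomputable section

/-- Real power of a matrix, taken via the spectral decomposition when the matrix is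
Hermitian (with the convention `0 ^ t` given by `Real.rpow`), and `0` otherwise. -/
def mpow {n : Type*} [Fintype n] [DecidableEq n] (A : Matrix n n ℂ) (t : ℝ) : Matrix n n ℂ :=
  if h : A.IsHermitian then
    (Matrix.IsHermitian.eigenvectorUnitary h : Matrix n n ℂ) *
      Matrix.diagonal (fun i => ((h.eigenvalues i ^ t : ℝ) : ℂ)) *
      (star (Matrix.IsHermitian.eigenvectorUnitary h : Matrix n n ℂ))
  else 0

/-- Logarithm of a matrix via the spectral decomposition (Hermitian case), `0` otherwise. -/
def mlog {n : Type*} [Fintype n] [DecidableEq n] (A : Matrix n n ℂ) : Matrix n n ℂ :=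
  if h : A.IsHermitian then
    (Matrix.IsHermitian.eigenvectorUnitary h : Matrix n n ℂ) *
      Matrix.diagonal (fun i => ((Real.log (h.eigenvalues i) : ℝ) : ℂ)) *
      (star (Matrix.IsHermitian.eigenvectorUnitary h : Matrix n n ℂ))
  else 0

/-- Exponential of a matrix via the spectral decomposition (Hermitian case), `0` otherwise. -/
def mexp {n : Type*} [Fintype n] [DecidableEq n] (A : Matrix n n ℂ) : Matrix n n ℂ :=
  if h : A.IsHermitian then
    (Matrix.IsHermitian.eigenvectorUnitary h : Matrix n n ℂ) *
      Matrix.diagonal (fun i => ((Real.exp (h.eigenvalues i) : ℝ) : ℂ)) *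
      (star (Matrix.IsHermitian.eigenvectorUnitary h : Matrix n n ℂ))
  else 0

/-- The orthogonal projection onto the span of the eigenvectors of a Hermitian matrix
corresponding to positive eigenvalues, denoted `{A > 0}` in the paper; `0` otherwise. -/
def posProj {n : Type*} [Fintype n] [DecidableEq n] (A : Matrix n n ℂ) : Matrix n n ℂ :=
  if h : A.IsHermitian then
    (Matrix.IsHermitian.eigenvectorUnitary h : Matrix n n ℂ) *
      Matrix.diagonal (fun i => if 0 < h.eigenvalues i then (1 : ℂ) else 0) *
      (star (Matrix.IsHermitian.eigenvectorUnitary h : Matrix n n ℂ))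
  else 0

/-- The `n`-fold tensor (Kronecker) power `ρ^{⊗n}`, as a matrix indexed by `Fin n → Fin d`. -/
def tensorPow {d : ℕ} (ρ : Matrix (Fin d) (Fin d) ℂ) (n : ℕ) :
    Matrix (Fin n → Fin d) (Fin n → Fin d) ℂ :=
  fun v w => ∏ t, ρ (v t) (w t)

/-- Quantum relative entropy `D(ρ‖σ) = Tr[ρ(log ρ − log σ)]`. -/
def qRelEnt {d : ℕ} (ρ σ : Matrix (Fin d) (Fin d) ℂ) : ℝ :=
  ((ρ * (mlog ρ - mlog σ)).trace).re

/-- `φ(s | ρ‖σ) = log Tr[ρ^{1−s} σ^{s}]`. -/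
def qphi {d : ℕ} (ρ σ : Matrix (Fin d) (Fin d) ℂ) (s : ℝ) : ℝ :=
  Real.log (((mpow ρ (1 - s)) * (mpow σ s)).trace.re)


private lemma myISup_shift (G : ℝ → ℝ) (c : ℝ) : ⨆ s : ℝ, G (s + c) = ⨆ s : ℝ, G s := by
  rw [iSup, iSup]
  congr 1
  ext y
  constructor
  · rintro ⟨s, rfl⟩; exact ⟨s + c, rfl⟩
  · rintro ⟨s, rfl⟩; exact ⟨s - c, by simp⟩

private lemma myCiSup_sub_const {f : ℝ → ℝ} (hb : BddAbove (Set.range f)) (c : ℝ) :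
    (⨆ s : ℝ, (f s - c)) = (⨆ s : ℝ, f s) - c := by
  obtain ⟨M, hM⟩ := hb
  have hb' : BddAbove (Set.range fun s => f s - c) := by
    refine ⟨M - c, ?_⟩
    rintro y ⟨s, rfl⟩
    have := hM ⟨s, rfl⟩
    simpa using sub_le_sub_right this c
  apply le_antisymm
  · exact ciSup_le fun s => sub_le_sub_right (le_ciSup ⟨M, hM⟩ s) c
  · rw [sub_le_iff_le_add]
    refine ciSup_le fun s => ?_
    have h := le_ciSup hb' s
    linarith

private lemma abstract_Psi (φ : ℝ → ℝ) (D D' : ℝ) (h0 : φ 0 = 0) (h1 : φ 1 = 0)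
    (hA : ∀ s, -D * s ≤ φ s) (hB : ∀ s, D' * (s - 1) ≤ φ s)
    (Φ Ψ : ℝ → ℝ) (hΦ : ∀ a, Φ a = ⨆ s : ℝ, (a * s - φ s))
    (hΨ : ∀ a, Ψ a = ⨆ s : ℝ, (a * s - φ (s + 1))) :
    (∀ a ∈ Set.Icc (-D) D', Ψ a = Φ a - a)
      ∧ ContinuousOn Ψ (Set.Icc (-D) D')
      ∧ AntitoneOn Ψ (Set.Icc (-D) D')
      ∧ Ψ (-D) = D ∧ Ψ D' = 0 := by
  have hD : 0 ≤ D := by have := hA 1; rw [h1] at this; linarith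
  have hD' : 0 ≤ D' := by have := hB 0; rw [h0] at this; linarith
  -- bound on F a s = a*s - φ s
  have bound : ∀ a ∈ Set.Icc (-D) D', ∀ s : ℝ, a * s - φ s ≤ |a| + D := by
    rintro a ⟨ha1, ha2⟩ s
    rcases le_or_gt s 0 with hs | hs
    · have h := hA s
      nlinarith [abs_nonneg a, mul_nonneg (by linarith : (0:ℝ) ≤ a + D) (by linarith : 0 ≤ -s)]
    rcases le_or_gt s 1 with hs1 | hs1
    · have h := hA s
      nlinarith [le_abs_self a, mul_le_mul_of_nonneg_right (le_abs_self a) hs.le,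
        mul_le_of_le_one_right (abs_nonneg a) hs1, mul_le_of_le_one_right hD hs1]
    · have h := hB s
      nlinarith [le_abs_self a, mul_nonpos_of_nonpos_of_nonneg
        (by linarith : a - D' ≤ 0) (by linarith : (0:ℝ) ≤ s - 1)]
  have hbdd : ∀ a ∈ Set.Icc (-D) D', BddAbove (Set.range fun s => a * s - φ s) := by
    intro a ha
    exact ⟨|a| + D, by rintro y ⟨s, rfl⟩; exact bound a ha s⟩
  -- Part 1 : Ψ a = Φ a - a on the interval
  have part1 : ∀ a ∈ Set.Icc (-D) D', Ψ a = Φ a - a := by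
    intro a ha
    rw [hΨ, hΦ]
    have e1 : (fun s : ℝ => a * s - φ (s + 1))
        = fun s : ℝ => (fun u : ℝ => (a * u - φ u) - a) (s + 1) := by
      funext s; ring_nf
    rw [e1, myISup_shift (fun u : ℝ => (a * u - φ u) - a) 1,
      myCiSup_sub_const (hbdd a ha) a]
  -- endpoint values of Φ
  have hmemD : -D ∈ Set.Icc (-D) D' := ⟨le_refl _, by linarith⟩
  have hmemD' : D' ∈ Set.Icc (-D) D' := ⟨by linarith, le_refl _⟩
  have ΦnegD : Φ (-D) = 0 := by
    rw [hΦ]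
    apply le_antisymm
    · exact ciSup_le fun s => by have := hA s; linarith
    · have h := le_ciSup (hbdd _ hmemD) 0
      simpa [h0] using h
  have ΦD' : Φ D' = D' := by
    rw [hΦ]
    apply le_antisymm
    · exact ciSup_le fun s => by have := hB s; linarith
    · have h := le_ciSup (hbdd _ hmemD') 1
      simpa [h1] using h
  -- monotonicity facts
  have M1 : ∀ a₁ ∈ Set.Icc (-D) D', ∀ a₂ ∈ Set.Icc (-D) D', a₁ ≤ a₂ → Φ a₁ ≤ Φ a₂ := by
    intro a₁ ha₁ a₂ ha₂ h12
    rw [hΦ, hΦ]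
    refine ciSup_le fun s => ?_
    rcases le_or_gt s 0 with hs | hs
    · have h := hA s
      have h2 : (0:ℝ) ≤ ⨆ s : ℝ, (a₂ * s - φ s) := by
        have := le_ciSup (hbdd _ ha₂) 0
        simpa [h0] using this
      nlinarith [mul_nonneg (by linarith [ha₁.1] : (0:ℝ) ≤ a₁ + D) (by linarith : 0 ≤ -s)]
    · have h := le_ciSup (hbdd _ ha₂) s
      have : a₁ * s ≤ a₂ * s := mul_le_mul_of_nonneg_right h12 hs.le
      linarith
  have M2 : ∀ a₁ ∈ Set.Icc (-D) D', ∀ a₂ ∈ Set.Icc (-D) D', a₁ ≤ a₂ →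
      Φ a₂ ≤ Φ a₁ + (a₂ - a₁) := by
    intro a₁ ha₁ a₂ ha₂ h12
    rw [hΦ, hΦ]
    refine ciSup_le fun s => ?_
    rcases le_or_gt s 1 with hs | hs
    · have h := le_ciSup (hbdd _ ha₁) s
      nlinarith [mul_le_mul_of_nonneg_left hs (by linarith : (0:ℝ) ≤ a₂ - a₁)]
    · have h := hB s
      have h1' := le_ciSup (hbdd _ ha₁) 1
      rw [h1] at h1'
      nlinarith [mul_nonpos_of_nonpos_of_nonneg
        (by linarith [ha₂.2] : a₂ - D' ≤ 0) (by linarith : (0:ℝ) ≤ s - 1)]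
  refine ⟨part1, ?_, ?_, ?_, ?_⟩
  · -- continuity
    apply LipschitzOnWith.continuousOn (K := 1)
    rw [lipschitzOnWith_iff_dist_le_mul]
    intro x hx y hy
    rw [Real.dist_eq, Real.dist_eq, NNReal.coe_one, one_mul, part1 x hx, part1 y hy]
    have h1 : x - y ≤ |x - y| := le_abs_self _
    have h2 : y - x ≤ |x - y| := by rw [abs_sub_comm]; exact le_abs_self _
    rcases le_total x y with hxy | hxy
    · have m1 := M1 x hx y hy hxy
      have m2 := M2 x hx y hy hxy
      rw [abs_le]
      constructor <;> linarith
    · have m1 := M1 y hy x hx hxy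
      have m2 := M2 y hy x hx hxy
      rw [abs_le]
      constructor <;> linarith
  · -- antitone
    intro a₁ ha₁ a₂ ha₂ h12
    rw [part1 a₁ ha₁, part1 a₂ ha₂]
    have := M2 a₁ ha₁ a₂ ha₂ h12
    linarith
  · rw [part1 _ hmemD, ΦnegD]; ring
  · rw [part1 _ hmemD', ΦD']; ring

private lemma trace_pair {n : Type*} [Fintype n] [DecidableEq n]
    (U V : Matrix n n ℂ) (f g : n → ℝ) :
    (U * Matrix.diagonal (fun k => (f k : ℂ)) * star U *
      (V * Matrix.diagonal (fun l => (g l : ℂ)) * star V)).trace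
    = ((∑ k, ∑ l, f k * g l * Complex.normSq ((star U * V) k l) : ℝ) : ℂ) := by
  have e1 : U * Matrix.diagonal (fun k => (f k : ℂ)) * star U *
      (V * Matrix.diagonal (fun l => (g l : ℂ)) * star V)
      = U * (Matrix.diagonal (fun k => (f k : ℂ)) *
          (star U * (V * (Matrix.diagonal (fun l => (g l : ℂ)) * star V)))) := by
    simp only [Matrix.mul_assoc]
  rw [e1, Matrix.trace_mul_comm]
  have e2 : Matrix.diagonal (fun k => (f k : ℂ)) *
      (star U * (V * (Matrix.diagonal (fun l => (g l : ℂ)) * star V))) * U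
      = Matrix.diagonal (fun k => (f k : ℂ)) *
        ((star U * V) * (Matrix.diagonal (fun l => (g l : ℂ)) * (star V * U))) := by
    simp only [Matrix.mul_assoc]
  rw [e2]
  have e3 : star V * U = star (star U * V) := by rw [Matrix.star_mul, star_star]
  rw [e3]
  set W := star U * V with hW
  rw [Matrix.trace]
  push_cast
  refine Finset.sum_congr rfl fun k _ => ?_
  rw [Matrix.diag_apply, Matrix.diagonal_mul, Matrix.mul_apply, Finset.mul_sum]
  refine Finset.sum_congr rfl fun l _ => ?_
  rw [Matrix.diagonal_mul, Matrix.star_apply, Complex.star_def]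
  linear_combination ((f k : ℂ) * (g l : ℂ)) * Complex.mul_conj (W k l)

private lemma jensen_log {ι : Type*} [Fintype ι] (w x : ι → ℝ)
    (hw0 : ∀ i, 0 ≤ w i) (hw1 : ∑ i, w i = 1) (T : ℝ)
    (hT : T = ∑ i, w i * Real.exp (x i)) :
    ∑ i, w i * x i ≤ Real.log T := by
  have hj := convexOn_exp.map_sum_le (t := Finset.univ) (w := w) (p := x)
      (fun i _ => hw0 i) hw1 (fun i _ => Set.mem_univ _)
  simp only [smul_eq_mul] at hj
  have hTpos : 0 < T := lt_of_lt_of_le (Real.exp_pos _) (by rw [hT]; exact hj)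
  rw [Real.le_log_iff_exp_le hTpos, hT]
  exact hj

private lemma rpow_term (a b co s : ℝ) (ha : 0 < a) (hb : 0 < b) :
    a ^ (1 - s) * b ^ s * co = (a * co) * Real.exp (s * (Real.log b - Real.log a)) := by
  rw [Real.rpow_def_of_pos ha, Real.rpow_def_of_pos hb, ← Real.exp_add]
  have e : Real.log a * (1 - s) + Real.log b * s
      = Real.log a + s * (Real.log b - Real.log a) := by ring
  rw [e, Real.exp_add, Real.exp_log ha]
  ring

private lemma rpow_term' (a b co s : ℝ) (ha : 0 < a) (hb : 0 < b) :
    a ^ (1 - s) * b ^ s * co = (b * co) * Real.exp ((1 - s) * (Real.log a - Real.log b)) := by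
  rw [Real.rpow_def_of_pos ha, Real.rpow_def_of_pos hb, ← Real.exp_add]
  have e : Real.log a * (1 - s) + Real.log b * s
      = Real.log b + (1 - s) * (Real.log a - Real.log b) := by ring
  rw [e, Real.exp_add, Real.exp_log hb]
  ring

private lemma matrix_data {d : ℕ} (ρ σ : Matrix (Fin d) (Fin d) ℂ)
    (hρ : ρ.PosDef) (hρ1 : ρ.trace = 1) (hσ : σ.PosDef) (hσ1 : σ.trace = 1) :
    ∃ (p q : Fin d → ℝ) (c : Fin d → Fin d → ℝ),
      (∀ k, 0 < p k) ∧ (∀ l, 0 < q l) ∧ (∀ k l, 0 ≤ c k l) ∧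
      (∀ k, ∑ l, c k l = 1) ∧ (∀ l, ∑ k, c k l = 1) ∧
      (∑ k, p k = 1) ∧ (∑ l, q l = 1) ∧
      (∀ s : ℝ, ((mpow ρ (1-s)) * (mpow σ s)).trace.re
          = ∑ k, ∑ l, p k ^ (1-s) * q l ^ s * c k l) ∧
      qRelEnt ρ σ = (∑ k, ∑ l, p k * c k l * (Real.log (p k) - Real.log (q l))) ∧
      qRelEnt σ ρ = (∑ k, ∑ l, q l * c k l * (Real.log (q l) - Real.log (p k))) := by
  have hρH : ρ.IsHermitian := hρ.1
  have hσH : σ.IsHermitian := hσ.1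
  obtain ⟨U, hU⟩ : ∃ U', U' = (hρH.eigenvectorUnitary : Matrix (Fin d) (Fin d) ℂ) := ⟨_, rfl⟩
  obtain ⟨V, hV⟩ : ∃ V', V' = (hσH.eigenvectorUnitary : Matrix (Fin d) (Fin d) ℂ) := ⟨_, rfl⟩
  obtain ⟨p, hpd⟩ : ∃ p', p' = hρH.eigenvalues := ⟨_, rfl⟩
  obtain ⟨q, hqd⟩ : ∃ q', q' = hσH.eigenvalues := ⟨_, rfl⟩
  have hU1 : star U * U = 1 := by rw [hU]; exact Unitary.coe_star_mul_self _
  have hU2 : U * star U = 1 := by rw [hU]; exact Unitary.coe_mul_star_self _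
  have hV1 : star V * V = 1 := by rw [hV]; exact Unitary.coe_star_mul_self _
  have hV2 : V * star V = 1 := by rw [hV]; exact Unitary.coe_mul_star_self _
  have hWW : (star U * V) * star (star U * V) = 1 := by
    rw [Matrix.star_mul, star_star, Matrix.mul_assoc, ← Matrix.mul_assoc V, hV2, one_mul, hU1]
  have hWW' : star (star U * V) * (star U * V) = 1 := by
    rw [Matrix.star_mul, star_star, Matrix.mul_assoc, ← Matrix.mul_assoc U, hU2, one_mul, hV1]
  have hrow : ∀ k, ∑ l, Complex.normSq ((star U * V) k l) = 1 := by
    intro k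
    have h := congrFun (congrFun hWW k) k
    rw [Matrix.mul_apply, Matrix.one_apply_eq] at h
    simp only [Matrix.star_apply, Complex.star_def, Complex.mul_conj] at h
    exact_mod_cast h
  have hcol : ∀ l, ∑ k, Complex.normSq ((star U * V) k l) = 1 := by
    intro l
    have h := congrFun (congrFun hWW' l) l
    rw [Matrix.mul_apply, Matrix.one_apply_eq] at h
    have hz : ∀ z : ℂ, (starRingEnd ℂ) z * z = (Complex.normSq z : ℂ) := fun z => by
      rw [mul_comm, Complex.mul_conj]
    simp only [Matrix.star_apply, Complex.star_def, hz] at h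
    exact_mod_cast h
  have hρeq : ρ = U * Matrix.diagonal (fun k => ((p k : ℝ) : ℂ)) * star U := by
    rw [hU, hpd]; exact hρH.spectral_theorem
  have hσeq : σ = V * Matrix.diagonal (fun l => ((q l : ℝ) : ℂ)) * star V := by
    rw [hV, hqd]; exact hσH.spectral_theorem
  have hmpowρ : ∀ t : ℝ, mpow ρ t
      = U * Matrix.diagonal (fun k => ((p k ^ t : ℝ) : ℂ)) * star U := by
    intro t; rw [mpow, dif_pos hρH, hU, hpd]
  have hmpowσ : ∀ t : ℝ, mpow σ t
      = V * Matrix.diagonal (fun l => ((q l ^ t : ℝ) : ℂ)) * star V := by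
    intro t; rw [mpow, dif_pos hσH, hV, hqd]
  have hmlogρ : mlog ρ = U * Matrix.diagonal (fun k => ((Real.log (p k) : ℝ) : ℂ)) * star U := by
    rw [mlog, dif_pos hρH, hU, hpd]
  have hmlogσ : mlog σ = V * Matrix.diagonal (fun l => ((Real.log (q l) : ℝ) : ℂ)) * star V := by
    rw [mlog, dif_pos hσH, hV, hqd]
  have hsum_p : ∑ k, p k = 1 := by
    have h : ρ.trace = ((∑ k, p k : ℝ) : ℂ) := by
      rw [hρeq, Matrix.trace_mul_comm, ← Matrix.mul_assoc, hU1, one_mul,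
        Matrix.trace_diagonal]
      push_cast
      rfl
    rw [hρ1] at h
    exact_mod_cast h.symm
  have hsum_q : ∑ l, q l = 1 := by
    have h : σ.trace = ((∑ l, q l : ℝ) : ℂ) := by
      rw [hσeq, Matrix.trace_mul_comm, ← Matrix.mul_assoc, hV1, one_mul,
        Matrix.trace_diagonal]
      push_cast
      rfl
    rw [hσ1] at h
    exact_mod_cast h.symm
  have collapse : ∀ f g : Fin d → ℝ,
      (∑ k, ∑ l, f k * g l * Complex.normSq ((1 : Matrix (Fin d) (Fin d) ℂ) k l))
        = ∑ k, f k * g k := by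
    intro f g
    refine Finset.sum_congr rfl fun k _ => ?_
    rw [Finset.sum_eq_single k]
    · simp [Matrix.one_apply_eq]
    · intro l _ hlk
      simp [Matrix.one_apply_ne (Ne.symm hlk)]
    · simp
  have t_rr : (ρ * mlog ρ).trace = ((∑ k, p k * Real.log (p k) : ℝ) : ℂ) := by
    rw [hmlogρ, hρeq, trace_pair, hU1, collapse]
  have t_ss : (σ * mlog σ).trace = ((∑ l, q l * Real.log (q l) : ℝ) : ℂ) := by
    rw [hmlogσ, hσeq, trace_pair, hV1, collapse]
  have t_rs : (ρ * mlog σ).trace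
      = ((∑ k, ∑ l, p k * Real.log (q l) * Complex.normSq ((star U * V) k l) : ℝ) : ℂ) := by
    rw [hmlogσ, hρeq, trace_pair]
  have t_sr : (σ * mlog ρ).trace
      = ((∑ l, ∑ k, q l * Real.log (p k) * Complex.normSq ((star U * V) k l) : ℝ) : ℂ) := by
    rw [hmlogρ, hσeq, trace_pair]
    congr 1
    refine Finset.sum_congr rfl fun l _ => Finset.sum_congr rfl fun k _ => ?_
    have : (star V * U) l k = star ((star U * V) k l) := by
      rw [show star V * U = star (star U * V) by rw [Matrix.star_mul, star_star],
        Matrix.star_apply]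
    rw [this, Complex.star_def, Complex.normSq_conj]
  refine ⟨p, q, fun k l => Complex.normSq ((star U * V) k l),
    fun k => hpd ▸ hρ.eigenvalues_pos k, fun l => hqd ▸ hσ.eigenvalues_pos l,
    fun k l => Complex.normSq_nonneg _, hrow, hcol, hsum_p, hsum_q, ?_, ?_, ?_⟩
  · intro s
    rw [hmpowρ, hmpowσ, trace_pair, Complex.ofReal_re]
  · rw [qRelEnt, mul_sub, Matrix.trace_sub, Complex.sub_re, t_rr, t_rs,
      Complex.ofReal_re, Complex.ofReal_re]
    rw [← Finset.sum_sub_distrib]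
    refine Finset.sum_congr rfl fun k _ => ?_
    have h1 : ∑ l, p k * Complex.normSq ((star U * V) k l) * Real.log (p k)
        = p k * Real.log (p k) := by
      rw [← Finset.sum_mul, ← Finset.mul_sum, hrow k, mul_one]
    simp only [mul_sub]
    rw [Finset.sum_sub_distrib, h1]
    congr 1
    exact Finset.sum_congr rfl fun l _ => by ring
  · rw [qRelEnt, mul_sub, Matrix.trace_sub, Complex.sub_re, t_ss, t_sr,
      Complex.ofReal_re, Complex.ofReal_re]
    conv_rhs => rw [Finset.sum_comm]
    rw [← Finset.sum_sub_distrib]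
    refine Finset.sum_congr rfl fun l _ => ?_
    have h1 : ∑ k, q l * Complex.normSq ((star U * V) k l) * Real.log (q l)
        = q l * Real.log (q l) := by
      rw [← Finset.sum_mul, ← Finset.mul_sum, hcol l, mul_one]
    simp only [mul_sub]
    rw [Finset.sum_sub_distrib, h1]
    congr 1
    exact Finset.sum_congr rfl fun k _ => by ring



private lemma concrete_facts {d : ℕ} (ρ σ : Matrix (Fin d) (Fin d) ℂ)
    (hρ : ρ.PosDef) (hρ1 : ρ.trace = 1) (hσ : σ.PosDef) (hσ1 : σ.trace = 1) :
    qphi ρ σ 0 = 0 ∧ qphi ρ σ 1 = 0 ∧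
      (∀ s, -(qRelEnt ρ σ) * s ≤ qphi ρ σ s) ∧
      (∀ s, qRelEnt σ ρ * (s - 1) ≤ qphi ρ σ s) := by
  obtain ⟨p, q, c, hp, hq, hc0, hrow, hcol, hsp, hsq, htr, hD, hD'⟩ :=
    matrix_data ρ σ hρ hρ1 hσ hσ1
  have hqphi : ∀ s : ℝ,
      qphi ρ σ s = Real.log (∑ k, ∑ l, p k ^ (1 - s) * q l ^ s * c k l) := by
    intro s; rw [qphi, htr s]
  have hw1 : (∑ k, ∑ l, p k * c k l) = 1 := by
    calc ∑ k, ∑ l, p k * c k l = ∑ k, p k * ∑ l, c k l := by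
          exact Finset.sum_congr rfl fun k _ => (Finset.mul_sum _ _ _).symm
      _ = 1 := by simp only [hrow, mul_one]; exact hsp
  have hw1' : (∑ k, ∑ l, q l * c k l) = 1 := by
    rw [Finset.sum_comm]
    calc ∑ l, ∑ k, q l * c k l = ∑ l, q l * ∑ k, c k l := by
          exact Finset.sum_congr rfl fun l _ => (Finset.mul_sum _ _ _).symm
      _ = 1 := by simp only [hcol, mul_one]; exact hsq
  refine ⟨?_, ?_, ?_, ?_⟩
  · rw [hqphi]
    have e : (∑ k, ∑ l, p k ^ (1 - (0:ℝ)) * q l ^ (0:ℝ) * c k l)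
        = ∑ k, ∑ l, p k * c k l := by
      refine Finset.sum_congr rfl fun k _ => Finset.sum_congr rfl fun l _ => ?_
      rw [sub_zero, Real.rpow_one, Real.rpow_zero, mul_one]
    rw [e, hw1, Real.log_one]
  · rw [hqphi]
    have e : (∑ k, ∑ l, p k ^ (1 - (1:ℝ)) * q l ^ (1:ℝ) * c k l)
        = ∑ k, ∑ l, q l * c k l := by
      refine Finset.sum_congr rfl fun k _ => Finset.sum_congr rfl fun l _ => ?_
      rw [sub_self, Real.rpow_zero, Real.rpow_one, one_mul]
    rw [e, hw1', Real.log_one]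
  · intro s
    rw [hqphi s, hD]
    have key := jensen_log (ι := Fin d × Fin d)
      (fun kl => p kl.1 * c kl.1 kl.2)
      (fun kl => s * (Real.log (q kl.2) - Real.log (p kl.1)))
      (fun kl => mul_nonneg (hp kl.1).le (hc0 _ _))
      (by rw [Fintype.sum_prod_type]; exact hw1)
      (∑ k, ∑ l, p k ^ (1 - s) * q l ^ s * c k l)
      (by rw [Fintype.sum_prod_type]
          exact Finset.sum_congr rfl fun k _ => Finset.sum_congr rfl fun l _ =>
            rpow_term (p k) (q l) (c k l) s (hp k) (hq l))
    refine le_trans (le_of_eq ?_) key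
    simp only [Fintype.sum_prod_type, neg_mul, Finset.sum_mul, ← Finset.sum_neg_distrib]
    exact Finset.sum_congr rfl fun k _ => Finset.sum_congr rfl fun l _ => by ring
  · intro s
    rw [hqphi s, hD']
    have key := jensen_log (ι := Fin d × Fin d)
      (fun kl => q kl.2 * c kl.1 kl.2)
      (fun kl => (1 - s) * (Real.log (p kl.1) - Real.log (q kl.2)))
      (fun kl => mul_nonneg (hq kl.2).le (hc0 _ _))
      (by rw [Fintype.sum_prod_type]; exact hw1')
      (∑ k, ∑ l, p k ^ (1 - s) * q l ^ s * c k l)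
      (by rw [Fintype.sum_prod_type]
          exact Finset.sum_congr rfl fun k _ => Finset.sum_congr rfl fun l _ =>
            rpow_term' (p k) (q l) (c k l) s (hp k) (hq l))
    refine le_trans (le_of_eq ?_) key
    simp only [Fintype.sum_prod_type, Finset.sum_mul]
    exact Finset.sum_congr rfl fun k _ => Finset.sum_congr rfl fun l _ => by ring

/-- Properties of `Ψ(a) = max_{s∈ℝ}(a·s − φ(s+1))`: it satisfies `Ψ(a) = Φ(a) − a` on
`[−D(ρ‖σ), D(σ‖ρ)]` where `Φ(a) = max_{s∈ℝ}(a·s − φ(s))`, is continuous and monotonically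
decreasing on this interval, with `Ψ(−D(ρ‖σ)) = D(ρ‖σ)` and `Ψ(D(σ‖ρ)) = 0`. -/
theorem Psi_properties {d : ℕ} (ρ σ : Matrix (Fin d) (Fin d) ℂ)
    (hρ : ρ.PosDef) (hρ1 : ρ.trace = 1)
    (hσ : σ.PosDef) (hσ1 : σ.trace = 1)
    (Φ Ψ : ℝ → ℝ)
    (hΦ : ∀ a, Φ a = ⨆ s : ℝ, (a * s - qphi ρ σ s))
    (hΨ : ∀ a, Ψ a = ⨆ s : ℝ, (a * s - qphi ρ σ (s + 1))) :
    (∀ a ∈ Set.Icc (-(qRelEnt ρ σ)) (qRelEnt σ ρ), Ψ a = Φ a - a)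
      ∧ ContinuousOn Ψ (Set.Icc (-(qRelEnt ρ σ)) (qRelEnt σ ρ))
      ∧ AntitoneOn Ψ (Set.Icc (-(qRelEnt ρ σ)) (qRelEnt σ ρ))
      ∧ Ψ (-(qRelEnt ρ σ)) = qRelEnt ρ σ
      ∧ Ψ (qRelEnt σ ρ) = 0 := by
  obtain ⟨h0, h1, hA, hB⟩ := concrete_facts ρ σ hρ hρ1 hσ hσ1
  exact abstract_Psi (qphi ρ σ) (qRelEnt ρ σ) (qRelEnt σ ρ) h0 h1 hA hB Φ Ψ hΦ hΨ
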